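/- Let k be a field, let A be a commutative Artinian local k-algebra with maximal ideal m and residue field A/m ≅ k, let R be a commutative k-algebra which is an integral domain, and set B = R ⊗_k A. If s ∈ B has nonzero image under the canonical surjection B → B/mB ≅ R, then s is a nonzerodivisor in B (i.e., multiplication by s on B is injective). -/

import Mathlib

open TensorProduct

/-- Let `k` be a field, `A` a commutative Artinian local `k`-algebra with
maximal ideal `m` and residue field `A/m ≅ k`, `R` an integral domain which is a
`k`-algebra, and `B = R ⊗[k] A`. If `s ∈ B` has nonzero image under the canonical
surjection `B → B/mB (≅ R)`, then `s` is a nonzerodivisor in `B`. -/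
theorem section_nonZeroDivisor_of_ne_zero_mod_maximalIdeal
    (k : Type*) [Field k]
    (A : Type*) [CommRing A] [IsArtinianRing A] [IsLocalRing A] [Algebra k A]
    (hres : Function.Bijective (algebraMap k (A ⧸ IsLocalRing.maximalIdeal A)))
    (R : Type*) [CommRing R] [IsDomain R] [Algebra k R]
    (mB : Ideal (R ⊗[k] A))
    (hmB : mB = Ideal.map
      (Algebra.TensorProduct.includeRight : A →ₐ[k] R ⊗[k] A).toRingHom
      (IsLocalRing.maximalIdeal A))
    (s : R ⊗[k] A)
    (hs : Ideal.Quotient.mk mB s ≠ 0) :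
    s ∈ nonZeroDivisors (R ⊗[k] A) := by
  set m := IsLocalRing.maximalIdeal A with hm
  -- residue field iso
  let e : k ≃ₐ[k] (A ⧸ m) := AlgEquiv.ofBijective (Algebra.ofId k _) hres
  let ψ : A →ₐ[k] R := (Algebra.ofId k R).comp (e.symm.toAlgHom.comp (Ideal.Quotient.mkₐ k m))
  let φ : (R ⊗[k] A) →ₐ[k] R :=
    Algebra.TensorProduct.lift (AlgHom.id k R) ψ (fun _ _ => Commute.all _ _)
  have ha : ∀ a : A, a - algebraMap k A (e.symm (Ideal.Quotient.mk m a)) ∈ m := by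
    intro a
    rw [← Ideal.Quotient.eq_zero_iff_mem, map_sub]
    have h2 : Ideal.Quotient.mk m (algebraMap k A (e.symm (Ideal.Quotient.mk m a)))
        = Ideal.Quotient.mk m a := by
      rw [← Ideal.Quotient.algebraMap_eq, ← IsScalarTower.algebraMap_apply]
      exact e.apply_symm_apply (Ideal.Quotient.mk m a)
    rw [h2, sub_self]
  have key : ∀ x : R ⊗[k] A, x - algebraMap R (R ⊗[k] A) (φ x) ∈ mB := by
    intro x
    induction x using TensorProduct.induction_on with
    | zero => simp
    | tmul r a =>
        set c := e.symm (Ideal.Quotient.mk m a) with hc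
        have hphi : φ (r ⊗ₜ[k] a) = r * algebraMap k R c := by
          simp [φ, ψ, c, Algebra.TensorProduct.lift_tmul, Algebra.ofId_apply]
        have h2 : r ⊗ₜ[k] a - algebraMap R (R ⊗[k] A) (r * algebraMap k R c)
            = (r ⊗ₜ[k] (1:A)) * ((1:R) ⊗ₜ[k] (a - algebraMap k A c)) := by
          rw [Algebra.TensorProduct.algebraMap_apply, Algebra.algebraMap_self, RingHom.id_apply,
            Algebra.TensorProduct.tmul_mul_tmul, mul_one, one_mul, TensorProduct.tmul_sub]
          congr 1
          rw [show r * algebraMap k R c = c • r from by rw [Algebra.smul_def, mul_comm],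
            TensorProduct.smul_tmul, Algebra.algebraMap_eq_smul_one]
        rw [hphi, h2, hmB]
        exact Ideal.mul_mem_left _ _ (Ideal.mem_map_of_mem _ (ha a))
    | add x y hx hy =>
        have : x + y - algebraMap R (R ⊗[k] A) (φ (x + y))
            = (x - algebraMap R (R ⊗[k] A) (φ x)) + (y - algebraMap R (R ⊗[k] A) (φ y)) := by
          rw [map_add, map_add]; ring
        rw [this]
        exact mB.add_mem hx hy
  set r := φ s with hr
  have hr0 : r ≠ 0 := by
    intro h0
    apply hs
    rw [Ideal.Quotient.eq_zero_iff_mem]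
    have := key s
    rw [← hr, h0, map_zero, sub_zero] at this
    exact this
  set u := algebraMap R (R ⊗[k] A) r with hu
  set t := s - u with ht
  have htm : t ∈ mB := key s
  -- nilpotency of mB
  obtain ⟨n, hn⟩ := IsArtinianRing.isNilpotent_jacobson_bot (R := A)
  rw [IsLocalRing.jacobson_eq_maximalIdeal ⊥ bot_ne_top] at hn
  have hmn : m ^ n = ⊥ := by rw [hm]; exact hn
  have htn : t ^ n = 0 := by
    have h3 : t ^ n ∈ mB ^ n := Ideal.pow_mem_pow htm n
    rw [hmB, ← Ideal.map_pow, hmn, Ideal.map_bot] at h3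
    simpa using h3
  rw [mem_nonZeroDivisors_iff_right]
  intro b hb
  have hsb : u * b = -(t * b) := by
    have h4 : (u + t) * b = 0 := by
      rw [show u + t = s by rw [ht]; ring, mul_comm]; exact hb
    linear_combination h4
  have hpow : ∀ j : ℕ, u ^ j * b = (-t) ^ j * b := by
    intro j
    induction j with
    | zero => simp
    | succ j ih =>
        calc u ^ (j+1) * b = u * (u ^ j * b) := by ring
        _ = u * ((-t) ^ j * b) := by rw [ih]
        _ = (-t) ^ j * (u * b) := by ring
        _ = (-t) ^ j * (-t * b) := by rw [hsb]; ring
        _ = (-t) ^ (j+1) * b := by ring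
  have hunb : u ^ n * b = 0 := by
    rw [hpow n, neg_pow, htn]; ring
  have : (r ^ n) • b = 0 := by
    rw [Algebra.smul_def, map_pow]
    exact hunb
  rcases smul_eq_zero.mp this with h | h
  · exact absurd h (pow_ne_zero n hr0)
  · exact h
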